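/- arXiv:1008.0075 — 2 statements merged into one kernel-verified Lean document; each statement's English description precedes it below -/
import Mathlib

section
/- Let g : ℝ → ℝ^d be defined by g(z) = (2πΔ)^{-d/2} · exp(-(‖z‖₂ + ρ)²/(2Δ)). If ε ∈ (0,1), ρ > 0, Δ ≥ 16 d² ρ²/ε², and R ≥ 2√(dΔ log(8d/ε)), then the integral of g over the Euclidean ball B(0,R) in ℝ^d is at least 1 - ε/2. -/
open MeasureTheory Real Set

lemma aux_integrable_gauss {d : ℕ} {b : ℝ} (hb : 0 < b) :
    Integrable (fun v : EuclideanSpace ℝ (Fin d) => Real.exp (-b * ‖v‖ ^ 2)) := by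
  have h := (GaussianFourier.integrable_cexp_neg_mul_sq_norm_add
      (V := EuclideanSpace ℝ (Fin d)) (b := (b : ℂ)) (by simpa using hb) 0 0).re
  simp only [zero_mul, add_zero] at h
  convert h using 2 with v
  rw [show -(b:ℂ) * (‖v‖:ℂ)^2 = ((-b*‖v‖^2 : ℝ):ℂ) by push_cast; ring,
    RCLike.re_to_complex]
  exact (Complex.exp_ofReal_re _).symm

lemma aux_integral_gauss {d : ℕ} {b : ℝ} (hb : 0 < b) :
    ∫ v : EuclideanSpace ℝ (Fin d), Real.exp (-b * ‖v‖ ^ 2) = (π / b) ^ ((d : ℝ) / 2) := by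
  rw [GaussianFourier.integral_rexp_neg_mul_sq_norm hb, finrank_euclideanSpace_fin]

set_option maxHeartbeats 2000000 in
/-- If `ε ∈ (0,1)`, `ρ > 0`, `Δ ≥ 16 d² ρ²/ε²` and `R ≥ 2√(dΔ log(8d/ε))`, then the
function `g(z) = (2πΔ)^{-d/2} exp(-(‖z‖₂+ρ)²/(2Δ))` has integral at least `1 - ε/2`
over the Euclidean ball `B(0,R)` in `ℝ^d`. -/
theorem gaussian_shifted_ball_integral {d : ℕ} (hd : 0 < d) (ε ρ Δ R : ℝ)
    (hε : ε ∈ Ioo (0 : ℝ) 1) (hρ : 0 < ρ)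
    (hΔ : 16 * (d : ℝ) ^ 2 * ρ ^ 2 / ε ^ 2 ≤ Δ)
    (hR : 2 * Real.sqrt ((d : ℝ) * Δ * Real.log (8 * d / ε)) ≤ R) :
    1 - ε / 2 ≤ ∫ z in Metric.closedBall (0 : EuclideanSpace ℝ (Fin d)) R,
      (2 * π * Δ) ^ (-(d : ℝ) / 2) * Real.exp (-(‖z‖ + ρ) ^ 2 / (2 * Δ)) := by
  obtain ⟨hε0, hε1⟩ := hε
  have hd1 : (1:ℝ) ≤ d := by exact_mod_cast hd
  have hΔ0 : 0 < Δ := lt_of_lt_of_le (by positivity) hΔ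
  have hρΔ : 16 * (d:ℝ)^2 * ρ^2 ≤ Δ * ε^2 := by
    have := (div_le_iff₀ (by positivity : (0:ℝ) < ε^2)).mp hΔ; linarith
  set t : ℝ := ε / (4 * d) with ht_def
  have ht0 : 0 < t := by positivity
  have ht1 : t ≤ 1 := by
    rw [ht_def, div_le_one (by positivity)]; nlinarith
  set b : ℝ := (1 + t) / (2 * Δ) with hb_def
  have hb0 : 0 < b := by positivity
  set c : ℝ := (2 * π * Δ) ^ (-(d : ℝ) / 2) with hc_def
  have hπΔ : (0:ℝ) < 2 * π * Δ := by positivity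
  have hc0 : 0 < c := Real.rpow_pos_of_pos hπΔ _
  set K : ℝ := Real.exp (-((1 + 1/t) * ρ^2 / (2*Δ))) with hK_def
  set S := Metric.closedBall (0 : EuclideanSpace ℝ (Fin d)) R with hS_def
  have hR0 : 0 ≤ R := le_trans (by positivity) hR
  set L : ℝ := Real.log (8 * d / ε) with hL_def
  have hlog2 : (0:ℝ) < Real.log 2 := Real.log_pos (by norm_num)
  have hL8 : 3 * Real.log 2 ≤ L := by
    have h8 : (8:ℝ) ≤ 8 * d / ε := by
      rw [le_div_iff₀ hε0]; nlinarith
    calc 3 * Real.log 2 = Real.log (2^3) := by rw [Real.log_pow]; push_cast; ring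
    _ ≤ L := by rw [hL_def]; exact Real.log_le_log (by norm_num) (by norm_num at h8 ⊢; linarith)
  have hL0 : 0 < L := by nlinarith
  have hR2 : 4 * (d * Δ * L) ≤ R^2 := by
    have hs0 : 0 ≤ Real.sqrt (d * Δ * L) := Real.sqrt_nonneg _
    have h1 : (Real.sqrt (d * Δ * L))^2 = d * Δ * L := Real.sq_sqrt (by positivity)
    nlinarith
  -- pointwise lower bound
  have hpoint : ∀ z : EuclideanSpace ℝ (Fin d),
      c * K * Real.exp (-b * ‖z‖^2) ≤ c * Real.exp (-(‖z‖+ρ)^2/(2*Δ)) := by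
    intro z
    have hz : 0 ≤ ‖z‖ := norm_nonneg z
    rw [mul_assoc]
    refine mul_le_mul_of_nonneg_left ?_ hc0.le
    rw [hK_def, ← Real.exp_add, Real.exp_le_exp]
    have key : (‖z‖+ρ)^2 ≤ (1 + 1/t) * ρ^2 + (1+t) * ‖z‖^2 := by
      have htu : t * (1/t) = 1 := mul_one_div_cancel ht0.ne'
      nlinarith [sq_nonneg (t * ‖z‖ - ρ), mul_pos ht0 ht0]
    have h2Δ : (0:ℝ) < 2 * Δ := by positivity
    rw [hb_def]
    have heq : -((1 + 1/t) * ρ^2 / (2*Δ)) + -((1+t)/(2*Δ)) * ‖z‖^2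
        = -((1 + 1/t) * ρ^2 + (1+t) * ‖z‖^2) / (2*Δ) := by ring
    rw [heq, div_le_div_iff₀ h2Δ h2Δ]
    nlinarith [mul_le_mul_of_nonneg_right key h2Δ.le]
  -- integrability on the ball
  have hSmeas : MeasurableSet S := Metric.isClosed_closedBall.measurableSet
  have hScompact : IsCompact S := isCompact_closedBall _ _
  have cont_f : Continuous fun z : EuclideanSpace ℝ (Fin d) =>
      c * Real.exp (-(‖z‖+ρ)^2/(2*Δ)) := by fun_prop
  have int_f : IntegrableOn (fun z : EuclideanSpace ℝ (Fin d) =>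
      c * Real.exp (-(‖z‖+ρ)^2/(2*Δ))) S := cont_f.continuousOn.integrableOn_compact hScompact
  have int_h0 : Integrable (fun z : EuclideanSpace ℝ (Fin d) =>
      c * K * Real.exp (-b * ‖z‖^2)) := (aux_integrable_gauss hb0).const_mul _
  have step1 : ∫ z in S, c * K * Real.exp (-b * ‖z‖^2)
      ≤ ∫ z in S, c * Real.exp (-(‖z‖+ρ)^2/(2*Δ)) :=
    setIntegral_mono_on int_h0.integrableOn int_f hSmeas (fun x _ => hpoint x)
  -- split the Gaussian integral
  have split : ∫ z in S, Real.exp (-b * ‖z‖^2)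
      = (π/b)^((d:ℝ)/2) - ∫ z in Sᶜ, Real.exp (-b * ‖z‖^2) := by
    have h := integral_add_compl hSmeas (aux_integrable_gauss hb0 (d := d))
    rw [aux_integral_gauss hb0] at h
    linarith
  -- tail estimate
  have hb4 : 0 < b/4 := by positivity
  have tail_le : ∫ z in Sᶜ, Real.exp (-b * ‖z‖^2)
      ≤ Real.exp (-(3/4) * b * R^2) * (π/(b/4))^((d:ℝ)/2) := by
    have int_g : Integrable (fun z : EuclideanSpace ℝ (Fin d) =>
        Real.exp (-(3/4) * b * R^2) * Real.exp (-(b/4) * ‖z‖^2)) :=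
      (aux_integrable_gauss hb4).const_mul _
    calc ∫ z in Sᶜ, Real.exp (-b * ‖z‖^2)
        ≤ ∫ z in Sᶜ, Real.exp (-(3/4) * b * R^2) * Real.exp (-(b/4) * ‖z‖^2) := by
          refine setIntegral_mono_on (aux_integrable_gauss hb0).integrableOn
            int_g.integrableOn hSmeas.compl (fun z hz => ?_)
          have hzR : R ≤ ‖z‖ := by
            simp only [hS_def, mem_compl_iff, Metric.mem_closedBall, dist_zero_right,
              not_le] at hz
            exact hz.le
          have hz2 : R^2 ≤ ‖z‖^2 := by nlinarith [norm_nonneg z]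
          rw [← Real.exp_add, Real.exp_le_exp]
          nlinarith [mul_le_mul_of_nonneg_left hz2 hb0.le]
      _ ≤ ∫ z : EuclideanSpace ℝ (Fin d),
            Real.exp (-(3/4) * b * R^2) * Real.exp (-(b/4) * ‖z‖^2) :=
          setIntegral_le_integral int_g
            (Filter.Eventually.of_forall fun x => by positivity)
      _ = Real.exp (-(3/4) * b * R^2) * (π/(b/4))^((d:ℝ)/2) := by
          rw [integral_const_mul, aux_integral_gauss hb4]
  -- algebra : c * (π/b)^(d/2) = (1+t)^(-(d/2)), and (π/(b/4))^(d/2) = 4^(d/2) * (π/b)^(d/2)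
  have ht1' : (0:ℝ) < 1 + t := by linarith
  have hPval : (π/b)^((d:ℝ)/2) = (2*π*Δ)^((d:ℝ)/2) * (1+t)^(-((d:ℝ)/2)) := by
    have hπb : π / b = (2*π*Δ) / (1+t) := by
      rw [hb_def]; field_simp
    rw [hπb, Real.div_rpow hπΔ.le ht1'.le, Real.rpow_neg ht1'.le, div_eq_mul_inv]
  have hcP : c * (π/b)^((d:ℝ)/2) = (1+t)^(-((d:ℝ)/2)) := by
    rw [hPval, hc_def, ← mul_assoc, ← Real.rpow_add hπΔ]
    rw [show -(d:ℝ)/2 + (d:ℝ)/2 = 0 by ring, Real.rpow_zero, one_mul]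
  have hP4 : (π/(b/4))^((d:ℝ)/2) = 4^((d:ℝ)/2) * (π/b)^((d:ℝ)/2) := by
    have : π / (b/4) = 4 * (π/b) := by field_simp
    rw [this, Real.mul_rpow (by norm_num) (by positivity)]
  have hP0 : 0 < (π/b)^((d:ℝ)/2) := Real.rpow_pos_of_pos (by positivity) _
  -- numeric bounds
  have tail_num : 4^((d:ℝ)/2) * Real.exp (-(3/4) * b * R^2) ≤ ε/8 := by
    have h4 : (4:ℝ)^((d:ℝ)/2) = Real.exp (Real.log 2 * d) := by
      rw [Real.rpow_def_of_pos (by norm_num : (0:ℝ) < 4)]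
      congr 1
      rw [show (4:ℝ) = 2^2 by norm_num, Real.log_pow]
      push_cast; ring
    have hbR : (3/2) * (d * L) ≤ (3/4) * b * R^2 := by
      have h1 : (1:ℝ) ≤ 1 + t := by linarith
      have h2 : 4 * (d * Δ * L) ≤ R^2 := hR2
      rw [hb_def]
      have heq : 3/4 * ((1+t)/(2*Δ)) * R^2 = (3*(1+t)*R^2)/(8*Δ) := by ring
      rw [heq, le_div_iff₀ (by positivity : (0:ℝ) < 8*Δ)]
      nlinarith [mul_le_mul_of_nonneg_right h1 (sq_nonneg R), h2, hΔ0, hL0, hd1]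
    have hexp : Real.log 2 * d + (-(3/4) * b * R^2) ≤ -L := by
      nlinarith [hL8, hlog2, hd1, hbR]
    calc 4^((d:ℝ)/2) * Real.exp (-(3/4) * b * R^2)
        = Real.exp (Real.log 2 * d + (-(3/4) * b * R^2)) := by rw [h4, Real.exp_add]
      _ ≤ Real.exp (-L) := Real.exp_le_exp.mpr hexp
      _ = ε / (8*d) := by
          rw [hL_def, Real.exp_neg, Real.exp_log (by positivity)]
          rw [inv_div]
      _ ≤ ε/8 := by
          apply div_le_div_of_nonneg_left hε0.le (by norm_num)
          nlinarith
  have front_num : 1 - 9*ε/32 ≤ K * (1+t)^(-((d:ℝ)/2)) := by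
    have hlog : Real.log (1+t) ≤ t := by
      have := Real.log_le_sub_one_of_pos ht1'
      linarith
    have hrw : (1+t:ℝ)^(-((d:ℝ)/2)) = Real.exp (Real.log (1+t) * (-((d:ℝ)/2))) :=
      Real.rpow_def_of_pos ht1' _
    have ha : (1 + 1/t) * ρ^2 / (2*Δ) + (d:ℝ)/2 * t ≤ 9*ε/32 := by
      have h1t : 1/t = 4*d/ε := by rw [ht_def, one_div_div]
      have hdt : (d:ℝ)/2 * t = ε/8 := by
        rw [ht_def]; field_simp; ring
      have ha1 : (1 + 4*d/ε) * ρ^2 / (2*Δ) ≤ 5*ε/32 := by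
        rw [div_le_iff₀ (by positivity : (0:ℝ) < 2*Δ)]
        have : (1 + 4*d/ε) = (ε + 4*d)/ε := by field_simp
        rw [this, div_mul_eq_mul_div, div_le_iff₀ hε0]
        have hed : ε ≤ (d:ℝ)^2 := by nlinarith
        have hdd : (d:ℝ) ≤ (d:ℝ)^2 := by nlinarith
        have hA : (ε + 4*d) * ρ^2 ≤ 5*(d:ℝ)^2*ρ^2 := by nlinarith [sq_nonneg ρ]
        nlinarith [hA, hρΔ]
      rw [h1t, hdt]
      linarith
    calc (1:ℝ) - 9*ε/32 ≤ 1 - ((1 + 1/t) * ρ^2 / (2*Δ) + (d:ℝ)/2 * t) := by linarith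
      _ ≤ Real.exp (-((1 + 1/t) * ρ^2 / (2*Δ) + (d:ℝ)/2 * t)) := by
          linarith [Real.add_one_le_exp (-((1 + 1/t) * ρ^2 / (2*Δ) + (d:ℝ)/2 * t))]
      _ ≤ K * (1+t)^(-((d:ℝ)/2)) := by
          rw [hK_def, hrw, ← Real.exp_add, Real.exp_le_exp]
          have : Real.log (1+t) * (-((d:ℝ)/2)) ≥ t * (-((d:ℝ)/2)) := by
            apply mul_le_mul_of_nonpos_right hlog
            simp only [Left.neg_nonpos_iff]
            positivity
          nlinarith [this]
  -- put everything together
  have hKt0 : 0 < K * (1+t)^(-((d:ℝ)/2)) := by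
    apply mul_pos (Real.exp_pos _) (Real.rpow_pos_of_pos ht1' _)
  have htail0 : 0 ≤ 4^((d:ℝ)/2) * Real.exp (-(3/4) * b * R^2) := by positivity
  calc 1 - ε/2 ≤ (1 - 9*ε/32) * (1 - ε/8) := by nlinarith
    _ ≤ (K * (1+t)^(-((d:ℝ)/2))) * (1 - 4^((d:ℝ)/2) * Real.exp (-(3/4) * b * R^2)) := by
        apply mul_le_mul front_num (by linarith [tail_num]) (by linarith) hKt0.le
    _ = c * K * ((π/b)^((d:ℝ)/2) - Real.exp (-(3/4) * b * R^2) * (π/(b/4))^((d:ℝ)/2)) := by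
        rw [hP4, ← hcP]; ring
    _ ≤ c * K * ∫ z in S, Real.exp (-b * ‖z‖^2) := by
        apply mul_le_mul_of_nonneg_left _ (by positivity)
        rw [split]
        linarith [tail_le]
    _ = ∫ z in S, c * K * Real.exp (-b * ‖z‖^2) := by
        rw [← integral_const_mul]
    _ ≤ ∫ z in S, c * Real.exp (-(‖z‖+ρ)^2/(2*Δ)) := step1
    _ = ∫ z in S, (2 * π * Δ) ^ (-(d : ℝ) / 2) * Real.exp (-(‖z‖ + ρ) ^ 2 / (2 * Δ)) := by
        rw [hc_def]
end

section
/- Let X be the sum of n i.i.d. Bernoulli random variables with mean p, and let a > 0. Then P(X ≥ np + a) ≤ exp(a - (pn + a) log(1 + a/(pn))). -/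
open MeasureTheory ProbabilityTheory Real

/-- Chernoff bound for the binomial distribution (Alon–Spencer, Corollary A.1.10):
if `X` is the sum of `n` i.i.d. Bernoulli random variables with mean `p` and `a > 0`, then
`P(X ≥ np + a) ≤ exp(a - (pn + a) log(1 + a/(pn)))`. -/
theorem binomial_chernoff {Ω : Type*} [MeasurableSpace Ω] (P : Measure Ω)
    [IsProbabilityMeasure P] (n : ℕ) (p : ℝ) (hp0 : 0 < p) (hp1 : p ≤ 1)
    (I : Fin n → Ω → ℕ)
    (hmeas : ∀ i, Measurable (I i))
    (hval : ∀ i ω, I i ω ≤ 1)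
    (hind : iIndepFun I P)
    (hid : ∀ i, P {ω | I i ω = 1} = ENNReal.ofReal p)
    (a : ℝ) (ha : 0 < a) :
    P {ω | (n : ℝ) * p + a ≤ ∑ i, (I i ω : ℝ)}
      ≤ ENNReal.ofReal (Real.exp (a - (p * n + a) * Real.log (1 + a / (p * n)))) := by
  rcases Nat.eq_zero_or_pos n with hn | hn
  · subst hn
    have : {ω : Ω | (0 : ℝ) * p + a ≤ ∑ i : Fin 0, (I i ω : ℝ)} = ∅ := by
      ext ω; simp [not_le, ha]
    simp only [Nat.cast_zero] at this ⊢
    rw [this]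
    simp
  -- main case
  set X : Fin n → Ω → ℝ := fun i ω => (I i ω : ℝ) with hX
  have hnp : 0 < p * n := by positivity
  set t : ℝ := Real.log (1 + a / (p * n)) with htdef
  have h1 : 0 < a / (p * n) := by positivity
  have het : Real.exp t = 1 + a / (p * n) := Real.exp_log (by linarith)
  have ht : 0 < t := Real.log_pos (by linarith)
  have hXmeas : ∀ i, Measurable (X i) := fun i => measurable_from_top.comp (hmeas i)
  have hXind : iIndepFun X P :=
    hind.comp (fun _ (k : ℕ) => (k : ℝ)) (fun _ => measurable_from_top)
  -- the set where I i = 1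
  have hA : ∀ i, MeasurableSet {ω | I i ω = 1} := fun i => hmeas i (measurableSet_singleton 1)
  have hPA : ∀ i, (P {ω | I i ω = 1}).toReal = p := fun i => by
    rw [hid i, ENNReal.toReal_ofReal hp0.le]
  -- rewrite exp (t * X i ω)
  have hform : ∀ i, (fun ω => Real.exp (t * X i ω)) =
      fun ω => Set.indicator {ω | I i ω = 1} (fun _ => Real.exp t - 1) ω + 1 := by
    intro i
    funext ω
    rcases Nat.le_one_iff_eq_zero_or_eq_one.mp (hval i ω) with h | h
    · simp [hX, h, Set.indicator_apply, Nat.zero_ne_one]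
    · simp [hX, h, Set.indicator_apply]
  have hint : ∀ i, Integrable (fun ω => Real.exp (t * X i ω)) P := by
    intro i
    rw [hform i]
    exact ((integrable_const (Real.exp t - 1)).indicator (hA i)).add (integrable_const 1)
  have hmgf : ∀ i, mgf (X i) P t = 1 + p * (Real.exp t - 1) := by
    intro i
    rw [mgf, hform i, integral_add _ (integrable_const 1)]
    · rw [integral_indicator_const _ (hA i), integral_const, probReal_univ]
      simp [Measure.real, hPA i]
      ring
    · exact (integrable_const (Real.exp t - 1)).indicator (hA i)
  -- Chernoff
  have hchern := measure_ge_le_exp_mul_mgf (μ := P) (X := ∑ i, X i) ((n : ℝ) * p + a) ht.le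
    (hXind.integrable_exp_mul_sum hXmeas (fun i _ => hint i))
  rw [hXind.mgf_sum hXmeas] at hchern
  have hsum : {ω | (n : ℝ) * p + a ≤ ∑ i, (I i ω : ℝ)} =
      {ω | (n : ℝ) * p + a ≤ (∑ i, X i) ω} := by
    ext ω; simp [hX]
  have hprod : (∏ i : Fin n, mgf (X i) P t) = (1 + p * (Real.exp t - 1)) ^ n := by
    rw [Finset.prod_congr rfl (fun i _ => hmgf i)]
    simp
  rw [hprod] at hchern
  -- bound (1 + p(e^t - 1))^n ≤ exp(n p (e^t-1)) and conclude
  have hx : (0:ℝ) ≤ p * (Real.exp t - 1) := by nlinarith [het, h1]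
  have hle : (1 + p * (Real.exp t - 1)) ^ n ≤ Real.exp ((n : ℝ) * (p * (Real.exp t - 1))) :=
    calc (1 + p * (Real.exp t - 1)) ^ n ≤ (Real.exp (p * (Real.exp t - 1))) ^ n := by
          apply pow_le_pow_left₀ (by linarith)
          linarith [Real.add_one_le_exp (p * (Real.exp t - 1))]
      _ = Real.exp ((n : ℝ) * (p * (Real.exp t - 1))) := (Real.exp_nat_mul _ n).symm
  have hkey : (n : ℝ) * (p * (Real.exp t - 1)) = a := by
    rw [het]; field_simp; ring
  rw [hsum, ← ENNReal.ofReal_toReal (measure_ne_top P _)]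
  apply ENNReal.ofReal_le_ofReal
  calc (P {ω | (n : ℝ) * p + a ≤ (∑ i, X i) ω}).toReal
      ≤ Real.exp (-t * ((n : ℝ) * p + a)) * (1 + p * (Real.exp t - 1)) ^ n := hchern
    _ ≤ Real.exp (-t * ((n : ℝ) * p + a)) * Real.exp ((n : ℝ) * (p * (Real.exp t - 1))) := by
        exact mul_le_mul_of_nonneg_left hle (Real.exp_nonneg _)
    _ = Real.exp (a - (p * n + a) * t) := by
        rw [← Real.exp_add, hkey]; congr 1; ring
end
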